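/- Let P be n points in ℝ^d with fixed centers c_1,...,c_k, and consider the level-set partition of P into regions R_{(l_1,...,l_k)} where point p lies in region (l_1,...,l_k) iff for each j, ‖p - c_j‖ ∈ ((1+ε)^{l_j - 1} r_min, (1+ε)^{l_j} r_min] (with level 0 meaning ‖p - c_j‖ ≤ r_min). Then: (i) balanced partitions of P into clusters of sizes in [L,U] correspond exactly to nonnegative integral solutions of the system Σ_j x^j_{(l_1,...,l_k)} = n_{(l_1,...,l_k)} for all tuples and L ≤ Σ_{tuples} x^j_{(l_1,...,l_k)} ≤ U for all j; and (ii) if a balanced partition has k-median cost W = Σ_j Σ_{p ∈ P_j} ‖p - c_j‖, then the corresponding integral solution has linear objective value Σ Σ_j (1+ε)^{l_j} r_min · x^j_{(l_1,...,l_k)} lying in the interval [W, (1+ε)W). -/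
import Mathlib


attribute [local instance] Classical.propDecidable


lemma lvl_contra {ε rmin r : ℝ} (hε : 0 < ε) (hrmin : 0 < rmin)
    {a b : ℕ} (hab : a < b)
    (ha : r ≤ (1+ε)^a * rmin)
    (hb : b = 0 ∨ (1+ε)^(b-1) * rmin < r) : False := by
  rcases hb with hb | hb
  · omega
  · have h1 : (1:ℝ) ≤ 1 + ε := by linarith
    have : (1+ε)^a ≤ (1+ε)^(b-1) := pow_le_pow_right₀ h1 (by omega)
    nlinarith

lemma lvl_unique {ε rmin r : ℝ} (hε : 0 < ε) (hrmin : 0 < rmin)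
    {a b : ℕ}
    (ha : r ≤ (1+ε)^a * rmin) (ha' : a = 0 ∨ (1+ε)^(a-1) * rmin < r)
    (hb : r ≤ (1+ε)^b * rmin) (hb' : b = 0 ∨ (1+ε)^(b-1) * rmin < r) : a = b := by
  rcases lt_trichotomy a b with h | h | h
  · exact absurd (lvl_contra hε hrmin h ha hb') id
  · exact h
  · exact absurd (lvl_contra hε hrmin h hb ha') id

lemma lvl_exists {ε rmin r : ℝ} (hε : 0 < ε) (hrmin : 0 < rmin) (L' : ℕ)
    (h1 : rmin ≤ r) (h2 : r ≤ (1+ε)^L' * rmin) :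
    ∃ l : ℕ, l ≤ L' ∧ r ≤ (1+ε)^l * rmin ∧ (l = 0 ∨ (1+ε)^(l-1) * rmin < r) := by
  have hex : ∃ l, r ≤ (1+ε)^l * rmin := ⟨L', h2⟩
  refine ⟨Nat.find hex, Nat.find_min' hex h2, Nat.find_spec hex, ?_⟩
  rcases Nat.eq_zero_or_pos (Nat.find hex) with h0 | h0
  · exact Or.inl h0
  · exact Or.inr (lt_of_not_ge (Nat.find_min hex (by omega)))

lemma split_lemma {α : Type*} [DecidableEq α] :
    ∀ (k : ℕ) (x : Fin k → ℕ) (s : Finset α), s.card = ∑ j, x j →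
    ∃ Q : Fin k → Finset α, (∀ j, Q j ⊆ s) ∧ (∀ i j, i ≠ j → Disjoint (Q i) (Q j)) ∧
      (∀ p ∈ s, ∃ j, p ∈ Q j) ∧ (∀ j, (Q j).card = x j) := by
  intro k
  induction k with
  | zero =>
    intro x s hs
    simp at hs
    refine ⟨fun _ => ∅, fun j => j.elim0, fun i => i.elim0, ?_, fun j => j.elim0⟩
    intro p hp
    simp [hs] at hp
  | succ m ih =>
    intro x s hs
    rw [Fin.sum_univ_succ] at hs
    obtain ⟨s0, hs0sub, hs0card⟩ := Finset.exists_subset_card_eq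
      (show x 0 ≤ s.card by omega)
    have hsd : (s \ s0).card = ∑ j : Fin m, x j.succ := by
      rw [Finset.card_sdiff_of_subset hs0sub]; omega
    obtain ⟨Q', hsub', hdisj', hcov', hcard'⟩ := ih (fun j => x j.succ) (s \ s0) hsd
    refine ⟨Fin.cons s0 Q', ?_, ?_, ?_, ?_⟩
    · intro j
      refine Fin.cases ?_ ?_ j
      · exact hs0sub
      · intro i; exact (hsub' i).trans (Finset.sdiff_subset)
    · intro i j hij
      rcases Fin.eq_zero_or_eq_succ i with rfl | ⟨i', rfl⟩ <;>
        rcases Fin.eq_zero_or_eq_succ j with rfl | ⟨j', rfl⟩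
      · simp at hij
      · simp only [Fin.cons_zero, Fin.cons_succ]
        exact Finset.disjoint_of_subset_right (hsub' j') Finset.disjoint_sdiff
      · simp only [Fin.cons_zero, Fin.cons_succ]
        exact (Finset.disjoint_of_subset_right (hsub' i') Finset.disjoint_sdiff).symm
      · simp only [Fin.cons_succ]
        exact hdisj' i' j' (fun h => hij (by rw [h]))
    · intro p hp
      by_cases h0 : p ∈ s0
      · exact ⟨0, by simpa using h0⟩
      · obtain ⟨j, hj⟩ := hcov' p (Finset.mem_sdiff.mpr ⟨hp, h0⟩)
        exact ⟨j.succ, by simpa using hj⟩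
    · intro j
      refine Fin.cases ?_ ?_ j
      · simpa using hs0card
      · intro i; simpa using hcard' i

/-- Point `p` lies in the level-set region indexed by the tuple `t`: for every center
`c j`, the distance `dist p (c j)` lies in the annulus of level `t j`. -/
def inRegion {d k L' : ℕ} (c : Fin k → EuclideanSpace ℝ (Fin d)) (ε rmin : ℝ)
    (p : EuclideanSpace ℝ (Fin d)) (t : Fin k → Fin (L' + 1)) : Prop :=
  ∀ j, dist p (c j) ≤ (1 + ε) ^ (t j : ℕ) * rmin ∧
    ((t j : ℕ) = 0 ∨ (1 + ε) ^ ((t j : ℕ) - 1) * rmin < dist p (c j))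

/-- `Q` is a partition of `P` into `k` clusters whose sizes all lie in `[L, U]`. -/
def IsBalancedPartition {α : Type*} (P : Finset α) (k L U : ℕ)
    (Q : Fin k → Finset α) : Prop :=
  (∀ j, Q j ⊆ P) ∧ (∀ i j, i ≠ j → Disjoint (Q i) (Q j)) ∧
  (∀ p ∈ P, ∃ j, p ∈ Q j) ∧ (∀ j, L ≤ (Q j).card ∧ (Q j).card ≤ U)

/-- (i) balanced partitions of `P` correspond to nonnegative integral
solutions of the level-set system; (ii) if a balanced partition has k-median cost `W`,
the objective value of the corresponding integral solution lies in `[W, (1+ε)W)`. -/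
theorem stmt7 {d k L' : ℕ} (hk : 0 < k) (P : Finset (EuclideanSpace ℝ (Fin d)))
    (hP : P.Nonempty)
    (c : Fin k → EuclideanSpace ℝ (Fin d)) (ε rmin : ℝ) (hε : 0 < ε) (hrmin : 0 < rmin)
    (hlow : ∀ p ∈ P, ∀ j, rmin ≤ dist p (c j))
    (hhigh : ∀ p ∈ P, ∀ j, dist p (c j) ≤ (1 + ε) ^ L' * rmin)
    (L U : ℕ) (hL : 0 < L)
    (n : (Fin k → Fin (L' + 1)) → ℕ)
    (hn : ∀ t, n t = (P.filter fun p => inRegion c ε rmin p t).card) :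
    ((∃ Q : Fin k → Finset (EuclideanSpace ℝ (Fin d)), IsBalancedPartition P k L U Q) ↔
      (∃ x : (Fin k → Fin (L' + 1)) → Fin k → ℕ,
        (∀ t, ∑ j, x t j = n t) ∧
        (∀ j, L ≤ ∑ t, x t j ∧ ∑ t, x t j ≤ U))) ∧
    (∀ Q : Fin k → Finset (EuclideanSpace ℝ (Fin d)), IsBalancedPartition P k L U Q →
      (∑ j, ∑ p ∈ Q j, dist p (c j)) ≤
        (∑ t : Fin k → Fin (L' + 1), ∑ j, (1 + ε) ^ (t j : ℕ) * rmin *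
          ((Q j).filter fun p => inRegion c ε rmin p t).card) ∧
      (∑ t : Fin k → Fin (L' + 1), ∑ j, (1 + ε) ^ (t j : ℕ) * rmin *
          ((Q j).filter fun p => inRegion c ε rmin p t).card) <
        (1 + ε) * ∑ j, ∑ p ∈ Q j, dist p (c j)) := by
  classical
  -- a region-assignment function
  have hfex : ∀ p : EuclideanSpace ℝ (Fin d),
      ∃ t : Fin k → Fin (L'+1), p ∈ P → inRegion c ε rmin p t := by
    intro p
    by_cases hp : p ∈ P
    · have h : ∀ j : Fin k, ∃ l : ℕ, l ≤ L' ∧ dist p (c j) ≤ (1+ε)^l * rmin ∧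
          (l = 0 ∨ (1+ε)^(l-1) * rmin < dist p (c j)) :=
        fun j => lvl_exists hε hrmin L' (hlow p hp j) (hhigh p hp j)
      choose l hl1 hl2 hl3 using h
      exact ⟨fun j => ⟨l j, by have := hl1 j; omega⟩, fun _ j => ⟨hl2 j, hl3 j⟩⟩
    · exact ⟨fun _ => 0, fun h => absurd h hp⟩
  choose f hf using hfex
  have hfiff : ∀ p ∈ P, ∀ t, inRegion c ε rmin p t ↔ f p = t := by
    intro p hp t
    constructor
    · intro ht
      funext j
      exact Fin.ext (lvl_unique hε hrmin ((hf p hp) j).1 ((hf p hp) j).2 (ht j).1 (ht j).2)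
    · rintro rfl; exact hf p hp
  have hfilter : ∀ (s : Finset (EuclideanSpace ℝ (Fin d))), s ⊆ P → ∀ t,
      (s.filter fun p => inRegion c ε rmin p t) = s.filter (fun p => f p = t) := by
    intro s hs t
    exact Finset.filter_congr (fun p hp => hfiff p (hs hp) t)
  have hnf : ∀ t, n t = (P.filter fun p => f p = t).card := fun t => by
    rw [hn t, hfilter P (Finset.Subset.refl P) t]
  constructor
  · constructor
    · rintro ⟨Q, hQsub, hQdisj, hQcov, hQcard⟩
      refine ⟨fun t j => ((Q j).filter fun p => f p = t).card, ?_, ?_⟩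
      · intro t
        rw [hnf t]
        have hPeq : P = Finset.univ.biUnion Q := by
          apply Finset.Subset.antisymm
          · intro p hp
            obtain ⟨j, hj⟩ := hQcov p hp
            exact Finset.mem_biUnion.mpr ⟨j, Finset.mem_univ j, hj⟩
          · intro p hp
            obtain ⟨j, _, hj⟩ := Finset.mem_biUnion.mp hp
            exact hQsub j hj
        rw [hPeq, Finset.filter_biUnion, Finset.card_biUnion]
        intro i _ j _ hij
        exact Finset.disjoint_filter_filter (hQdisj i j hij)
      · intro j
        have hc : ∑ t, ((Q j).filter fun p => f p = t).card = (Q j).card :=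
          (Finset.card_eq_sum_card_fiberwise (fun p _ => Finset.mem_univ (f p))).symm
        rw [hc]
        exact hQcard j
    · rintro ⟨x, hx1, hx2⟩
      have hreg : ∀ t, (P.filter fun p => f p = t).card = ∑ j, x t j := fun t => by
        rw [← hnf t, ← hx1 t]
      choose Qt hQtsub hQtdisj hQtcov hQtcard using fun t =>
        split_lemma k (x t) _ (hreg t)
      have hcross : ∀ t t' i j, (t ≠ t' ∨ i ≠ j) → Disjoint (Qt t i) (Qt t' j) := by
        intro t t' i j h
        by_cases htt : t = t'
        · subst htt
          exact hQtdisj t i j (h.resolve_left (by simp))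
        · refine Finset.disjoint_left.mpr (fun {p} hpi hpj => ?_)
          have h1 := Finset.mem_filter.mp (hQtsub t i hpi)
          have h2 := Finset.mem_filter.mp (hQtsub t' j hpj)
          exact htt (h1.2.symm.trans h2.2)
      refine ⟨fun j => Finset.univ.biUnion (fun t => Qt t j), ?_, ?_, ?_, ?_⟩
      · intro j
        refine Finset.biUnion_subset.mpr (fun t _ => ?_)
        exact (hQtsub t j).trans (Finset.filter_subset _ _)
      · intro i j hij
        rw [Finset.disjoint_biUnion_left]
        intro t _
        rw [Finset.disjoint_biUnion_right]
        intro t' _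
        exact hcross t t' i j (Or.inr hij)
      · intro p hp
        obtain ⟨j, hj⟩ := hQtcov (f p) p (Finset.mem_filter.mpr ⟨hp, rfl⟩)
        exact ⟨j, Finset.mem_biUnion.mpr ⟨f p, Finset.mem_univ _, hj⟩⟩
      · intro j
        have hc : (Finset.univ.biUnion fun t => Qt t j).card = ∑ t, x t j := by
          rw [Finset.card_biUnion (fun t _ t' _ htt => hcross t t' j j (Or.inl htt))]
          exact Finset.sum_congr rfl (fun t _ => hQtcard t j)
        rw [hc]
        exact hx2 j
  · rintro Q ⟨hQsub, hQdisj, hQcov, hQcard⟩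
    have hW : ∀ j, ∑ p ∈ Q j, dist p (c j)
        = ∑ t, ∑ p ∈ (Q j).filter (fun q => f q = t), dist p (c j) :=
      fun j => (Finset.sum_fiberwise (Q j) f (fun p => dist p (c j))).symm
    have hptlow : ∀ j t, ∀ p ∈ (Q j).filter (fun q => f q = t),
        dist p (c j) ≤ (1+ε)^(t j : ℕ) * rmin := by
      intro j t p hp
      obtain ⟨hpQ, hpt⟩ := Finset.mem_filter.mp hp
      have hreg : inRegion c ε rmin p t := hpt ▸ hf p (hQsub j hpQ)
      exact (hreg j).1
    have hptup : ∀ j t, ∀ p ∈ (Q j).filter (fun q => f q = t),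
        (1+ε)^(t j : ℕ) * rmin < (1+ε) * dist p (c j) := by
      intro j t p hp
      obtain ⟨hpQ, hpt⟩ := Finset.mem_filter.mp hp
      have hpP := hQsub j hpQ
      have hreg : inRegion c ε rmin p t := hpt ▸ hf p hpP
      have hd := hlow p hpP j
      by_cases h0 : (t j : ℕ) = 0
      · rw [h0]
        simp only [pow_zero, one_mul]
        nlinarith
      · have h1 : (1+ε)^((t j : ℕ) - 1) * rmin < dist p (c j) := (hreg j).2.resolve_left h0
        have h2 : (1+ε)^(t j : ℕ) = (1+ε) * (1+ε)^((t j : ℕ)-1) := by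
          conv_lhs => rw [show (t j : ℕ) = ((t j : ℕ)-1)+1 by omega]
          rw [pow_succ]; ring
        rw [h2, mul_assoc]
        exact mul_lt_mul_of_pos_left h1 (by linarith)
    have hobj : (∑ t : Fin k → Fin (L' + 1), ∑ j, (1 + ε) ^ (t j : ℕ) * rmin *
          ((Q j).filter fun p => inRegion c ε rmin p t).card)
        = ∑ j, ∑ t, ∑ _p ∈ (Q j).filter (fun q => f q = t), (1+ε)^(t j : ℕ) * rmin := by
      rw [Finset.sum_comm]
      refine Finset.sum_congr rfl fun j _ => Finset.sum_congr rfl fun t _ => ?_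
      rw [hfilter (Q j) (hQsub j) t, Finset.sum_const, nsmul_eq_mul, mul_comm]
    constructor
    · rw [hobj]
      refine Finset.sum_le_sum fun j _ => ?_
      rw [hW j]
      exact Finset.sum_le_sum fun t _ => Finset.sum_le_sum fun p hp => hptlow j t p hp
    · rw [hobj, Finset.mul_sum]
      have hWj : ∀ j, (1+ε) * ∑ p ∈ Q j, dist p (c j)
          = ∑ t, ∑ p ∈ (Q j).filter (fun q => f q = t), (1+ε) * dist p (c j) := by
        intro j
        rw [hW j, Finset.mul_sum]
        exact Finset.sum_congr rfl fun t _ => Finset.mul_sum _ _ _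
      refine Finset.sum_lt_sum (fun j _ => ?_) ⟨⟨0, hk⟩, Finset.mem_univ _, ?_⟩
      · rw [hWj j]
        exact Finset.sum_le_sum fun t _ => Finset.sum_le_sum fun p hp =>
          le_of_lt (hptup j t p hp)
      · rw [hWj ⟨0, hk⟩]
        have hne : (Q ⟨0, hk⟩).Nonempty :=
          Finset.card_pos.mp (lt_of_lt_of_le hL (hQcard ⟨0, hk⟩).1)
        obtain ⟨p0, hp0⟩ := hne
        refine Finset.sum_lt_sum
          (fun t _ => Finset.sum_le_sum fun p hp => le_of_lt (hptup ⟨0, hk⟩ t p hp))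
          ⟨f p0, Finset.mem_univ _, ?_⟩
        exact Finset.sum_lt_sum_of_nonempty ⟨p0, Finset.mem_filter.mpr ⟨hp0, rfl⟩⟩
          (fun p hp => hptup ⟨0, hk⟩ (f p0) p hp)
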